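/- Let A be a C*-algebra, M a Hilbert A-module, and (m₁, m₂, …) a sequence in M. The map φ : ℓ²(A) → M, φ((a₁, a₂, …)) = Σₙ aₙ mₙ, defines a bounded A-module map if and only if the matrix (⟨mᵢ, mⱼ⟩)ᵢⱼ is bounded in M_∞(A), i.e. supₙ ‖(⟨mᵢ, mⱼ⟩)ᵢ,ⱼ=1ⁿ‖ < ∞; and in that case ‖φ‖² equals sup over n of ‖(⟨mᵢ,mⱼ⟩)ᵢ,ⱼ=1ⁿ‖ (i.e. ‖φ‖ = ‖(⟨mᵢ,mⱼ⟩)‖^{1/2} in the paper's normalization). -/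

import Mathlib

open scoped RightActions InnerProductSpace
open WithCStarModule

variable {A : Type*} [CStarAlgebra A] [PartialOrder A] [StarOrderedRing A]

/-- The December 2024 Mathlib `CStarModule` (right Hilbert module, `SMul Aᵐᵒᵖ E`, inner product
`A`-linear on the right: `⟪x, y <• a⟫ = ⟪x, y⟫ * a`). Current Mathlib's `CStarModule` uses the
opposite (left-module) convention, so the old notion is restated here. -/
class RightCStarModule (A : outParam Type*) (E : Type*) [NonUnitalSemiring A] [StarRing A]
    [Module ℂ A] [AddCommGroup E] [Module ℂ E] [PartialOrder A] [SMul Aᵐᵒᵖ E] [Norm A] [Norm E]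
    extends Inner A E where
  inner_add_right {x} {y} {z} : inner x (y + z) = inner x y + inner x z
  inner_self_nonneg {x} : 0 ≤ inner x x
  inner_self {x} : inner x x = 0 ↔ x = 0
  inner_op_smul_right {a : A} {x y : E} : inner x (y <• a) = inner x y * a
  inner_smul_right_complex {z : ℂ} {x} {y} : inner x (z • y) = z • inner x y
  star_inner x y : star (inner x y) = inner y x
  norm_eq_sqrt_norm_inner_self x : ‖x‖ = √‖inner x x‖

/-- The old norm of `C⋆ᵐᵒᵈ (Fin n → A)`: `‖x‖ = √‖∑ i, star (x i) * x i‖`. -/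
noncomputable def oldPiCStarNorm (n : ℕ) (x : Fin n → A) : ℝ :=
  √‖∑ i, star (x i) * x i‖

/-- The canonical C*-norm on `Mₙ(A)`: the operator norm of the matrix acting on the
standard Hilbert `A`-module `Aⁿ`. -/
noncomputable def matCStarNorm (n : ℕ) (P : Matrix (Fin n) (Fin n) A) : ℝ :=
  sSup {r : ℝ | ∃ v : Fin n → A, oldPiCStarNorm n v ≤ 1 ∧
    r = oldPiCStarNorm n (fun i => ∑ j, P i j * v j)}

section AuxStmt14
variable {M : Type*} [NormedAddCommGroup M] [NormedSpace ℂ M] [SMul Aᵐᵒᵖ M] [RightCStarModule A M]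

lemma rcs_star_inner (x y : M) : star ⟪x, y⟫_A = ⟪y, x⟫_A := RightCStarModule.star_inner x y

lemma rcs_inner_add_left (x y z : M) : ⟪x + y, z⟫_A = ⟪x, z⟫_A + ⟪y, z⟫_A := by
  rw [← rcs_star_inner, RightCStarModule.inner_add_right, star_add, rcs_star_inner, rcs_star_inner]

/-- additive map `y ↦ ⟪x, y⟫` -/
def rcsInnerR (x : M) : M →+ A :=
  AddMonoidHom.mk' (fun y => ⟪x, y⟫_A) (fun _ _ => RightCStarModule.inner_add_right)

/-- additive map `x ↦ ⟪x, y⟫` -/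
def rcsInnerL (y : M) : M →+ A :=
  AddMonoidHom.mk' (fun x => ⟪x, y⟫_A) (fun x z => rcs_inner_add_left x z y)

lemma rcs_inner_sub_right (x y z : M) : ⟪x, y - z⟫_A = ⟪x, y⟫_A - ⟪x, z⟫_A :=
  map_sub (rcsInnerR x) y z

lemma rcs_inner_sub_left (x y z : M) : ⟪x - y, z⟫_A = ⟪x, z⟫_A - ⟪y, z⟫_A :=
  map_sub (rcsInnerL z) x y

lemma rcs_inner_sum_right {k : ℕ} (x : M) (y : Fin k → M) :
    ⟪x, ∑ i, y i⟫_A = ∑ i, ⟪x, y i⟫_A :=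
  map_sum (rcsInnerR x) y Finset.univ

lemma rcs_inner_sum_left {k : ℕ} (x : Fin k → M) (y : M) :
    ⟪∑ i, x i, y⟫_A = ∑ i, ⟪x i, y⟫_A :=
  map_sum (rcsInnerL y) x Finset.univ

lemma rcs_inner_op_smul_right (x y : M) (a : A) : ⟪x, y <• a⟫_A = ⟪x, y⟫_A * a :=
  RightCStarModule.inner_op_smul_right

lemma rcs_inner_op_smul_left (x y : M) (a : A) : ⟪x <• a, y⟫_A = star a * ⟪x, y⟫_A := by
  rw [← rcs_star_inner, rcs_inner_op_smul_right, star_mul, rcs_star_inner]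

lemma rcs_inner_smul_right_real (x y : M) (r : ℝ) : ⟪x, r • y⟫_A = r • ⟪x, y⟫_A := by
  rw [RCLike.real_smul_eq_coe_smul (K := ℂ) r y, RightCStarModule.inner_smul_right_complex,
    ← RCLike.real_smul_eq_coe_smul (K := ℂ)]

lemma rcs_inner_smul_left_real (x y : M) (r : ℝ) : ⟪r • x, y⟫_A = r • ⟪x, y⟫_A := by
  rw [← rcs_star_inner, rcs_inner_smul_right_real, star_smul, star_trivial, rcs_star_inner]

lemma rcs_norm_sq_eq (x : M) : ‖x‖ ^ 2 = ‖⟪x, x⟫_A‖ := by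
  rw [RightCStarModule.norm_eq_sqrt_norm_inner_self (A := A) x, Real.sq_sqrt (norm_nonneg _)]

lemma rcs_norm_inner_le (x y : M) : ‖⟪x, y⟫_A‖ ≤ ‖x‖ * ‖y‖ := by
  rcases eq_or_lt_of_le (sq_nonneg ‖x‖) with h0 | hpos
  · have hx : x = 0 := RightCStarModule.inner_self.mp
      (norm_eq_zero.mp (by rw [← rcs_norm_sq_eq, ← h0]))
    subst hx
    have : ⟪(0:M), y⟫_A = 0 := map_zero (rcsInnerL y)
    simp [this]
  · set s : ℝ := ‖x‖ ^ 2 with hs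
    have hs' : s = ‖⟪x, x⟫_A‖ := rcs_norm_sq_eq x
    set a := ⟪x, y⟫_A with ha
    have hsa : ⟪y, x⟫_A = star a := (rcs_star_inner x y).symm
    have h1 : (0 : A) ≤ star a * ⟪x, x⟫_A * a - s • (star a * a) - s • (star a * a)
        + s • s • ⟪y, y⟫_A := by
      have := RightCStarModule.inner_self_nonneg (A := A) (x := x <• a - s • y)
      simp only [rcs_inner_sub_left, rcs_inner_sub_right, rcs_inner_op_smul_left,
        rcs_inner_op_smul_right, rcs_inner_smul_left_real, rcs_inner_smul_right_real, hsa, ← ha] at this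
      convert this using 1
      simp only [sub_mul, mul_sub, smul_sub, mul_assoc, mul_smul_comm, smul_mul_assoc]
      abel
    have h2 : star a * ⟪x, x⟫_A * a ≤ s • (star a * a) := by
      rw [hs']
      exact CStarAlgebra.star_left_conjugate_le_norm_smul (RightCStarModule.star_inner x x)
    have h3 : (0 : A) ≤ s • s • ⟪y, y⟫_A - s • (star a * a) := by
      calc (0 : A) ≤ _ := h1
        _ ≤ s • (star a * a) - s • (star a * a) - s • (star a * a) + s • s • ⟪y, y⟫_A := by
          gcongr
        _ = _ := by abel
    have h4 : star a * a ≤ s • ⟪y, y⟫_A :=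
      (smul_le_smul_iff_of_pos_left hpos).mp (sub_nonneg.mp h3)
    have h5 : ‖a‖ ^ 2 ≤ (‖x‖ * ‖y‖) ^ 2 := by
      calc ‖a‖ ^ 2 = ‖star a * a‖ := by rw [CStarRing.norm_star_mul_self, pow_two]
        _ ≤ ‖s • ⟪y, y⟫_A‖ :=
          CStarAlgebra.norm_le_norm_of_nonneg_of_le (star_mul_self_nonneg a) h4
        _ = s * ‖y‖ ^ 2 := by
          rw [norm_smul, rcs_norm_sq_eq y, Real.norm_eq_abs, abs_of_nonneg hpos.le]
        _ = (‖x‖ * ‖y‖) ^ 2 := by rw [hs, mul_pow]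
    exact (pow_le_pow_iff_left₀ (norm_nonneg _) (by positivity) (by norm_num)).mp h5

lemma inner_phi (m : ℕ → M) {k : ℕ} (a : Fin k → A) (i : ℕ) :
    ⟪m i, ∑ j : Fin k, m j <• a j⟫_A = ∑ j : Fin k, ⟪m i, m (j:ℕ)⟫_A * a j := by
  rw [rcs_inner_sum_right]
  simp only [rcs_inner_op_smul_right]

lemma phi_inner_phi (m : ℕ → M) {k : ℕ} (a : Fin k → A) :
    ⟪∑ i : Fin k, m i <• a i, ∑ j : Fin k, m j <• a j⟫_A
      = ∑ i : Fin k, star (a i) * (∑ j : Fin k, ⟪m (i:ℕ), m (j:ℕ)⟫_A * a j) := by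
  rw [rcs_inner_sum_left]
  refine Finset.sum_congr rfl fun i _ => ?_
  rw [rcs_inner_op_smul_left, inner_phi]

lemma gram_inner_gram (m : ℕ → M) {k : ℕ} (a : Fin k → A) :
    ∑ i : Fin k, star (∑ j : Fin k, ⟪m (i:ℕ), m (j:ℕ)⟫_A * a j)
        * (∑ j : Fin k, ⟪m (i:ℕ), m (j:ℕ)⟫_A * a j)
      = ⟪∑ i : Fin k, m i <• a i,
          ∑ i : Fin k, m i <• (∑ j : Fin k, ⟪m (i:ℕ), m (j:ℕ)⟫_A * a j)⟫_A := by
  rw [rcs_inner_sum_right]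
  refine Finset.sum_congr rfl fun i _ => ?_
  rw [rcs_inner_op_smul_right, ← inner_phi m a i, rcs_star_inner]

/-- transfer of `Fin k → A` with the old norm to Mathlib's Hilbert module -/
noncomputable def toMod {k : ℕ} (a : Fin k → A) : C⋆ᵐᵒᵈ(A, Fin k → A) :=
  (WithCStarModule.equiv A (Fin k → A)).symm (fun i => star (a i))

lemma norm_toMod {k : ℕ} (a : Fin k → A) : ‖toMod a‖ = oldPiCStarNorm k a := by
  rw [pi_norm]
  simp [toMod, oldPiCStarNorm, inner_def]

lemma oldPi_nonneg (k : ℕ) (a : Fin k → A) : 0 ≤ oldPiCStarNorm k a := Real.sqrt_nonneg _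

lemma oldPi_sq (k : ℕ) (a : Fin k → A) :
    oldPiCStarNorm k a ^ 2 = ‖∑ i, star (a i) * a i‖ := Real.sq_sqrt (norm_nonneg _)

lemma oldPi_inner_le {k : ℕ} (a b : Fin k → A) :
    ‖∑ i, star (a i) * b i‖ ≤ oldPiCStarNorm k a * oldPiCStarNorm k b := by
  rw [← norm_toMod, ← norm_toMod]
  have h : ⟪toMod a, toMod b⟫_A = star (∑ i, star (a i) * b i) := by
    rw [pi_inner]
    simp [toMod, inner_def, star_sum]
  rw [← norm_star, ← h]
  exact CStarModule.norm_inner_le _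

lemma norm_apply_le_oldPi {k : ℕ} (a : Fin k → A) (j : Fin k) : ‖a j‖ ≤ oldPiCStarNorm k a := by
  rw [← norm_toMod, ← norm_star (a j)]
  exact norm_apply_le_norm (toMod a) j

lemma oldPi_le_sum {k : ℕ} (a : Fin k → A) : oldPiCStarNorm k a ≤ ∑ i, ‖a i‖ := by
  rw [← norm_toMod]
  refine (pi_norm_le_sum_norm (toMod a)).trans (le_of_eq ?_)
  refine Finset.sum_congr rfl fun i _ => ?_
  exact norm_star (a i)

lemma oldPi_pos {k : ℕ} (a : Fin k → A) (ha : a ≠ 0) : 0 < oldPiCStarNorm k a := by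
  rw [← norm_toMod, norm_pos_iff]
  intro h
  apply ha
  funext i
  have := congrArg (fun x : C⋆ᵐᵒᵈ(A, Fin k → A) => x i) h
  simpa [toMod] using this

lemma oldPi_smul {k : ℕ} (r : ℝ) (a : Fin k → A) :
    oldPiCStarNorm k (((r : ℂ)) • a) = |r| * oldPiCStarNorm k a := by
  have h : ∑ i, star ((((r : ℂ)) • a) i) * (((r : ℂ)) • a) i
      = ((r : ℂ) * (r : ℂ)) • ∑ i, star (a i) * a i := by
    rw [Finset.smul_sum]
    refine Finset.sum_congr rfl fun i _ => ?_
    simp [star_smul, Complex.star_def, Complex.conj_ofReal, smul_mul_assoc, mul_smul_comm,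
      smul_smul]
    rw [RCLike.real_smul_eq_coe_smul (K := ℂ), RCLike.ofReal_mul]
    rfl
  unfold oldPiCStarNorm
  rw [h, norm_smul, norm_mul, Complex.norm_real, Real.sqrt_mul (by positivity),
    Real.sqrt_mul_self (norm_nonneg _), Real.norm_eq_abs]

section Key

/-- the function `a ↦ G a` (Gram matrix applied to a tuple) -/
noncomputable def gfun (m : ℕ → M) (k : ℕ) (a : Fin k → A) : Fin k → A :=
  fun i : Fin k => ∑ j : Fin k, ⟪m (i:ℕ), m (j:ℕ)⟫_A * a j

lemma gfun_smul (m : ℕ → M) (k : ℕ) (c : ℂ) (a : Fin k → A) :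
    gfun m k (c • a) = c • gfun m k a := by
  ext i
  simp [gfun, Finset.smul_sum, mul_smul_comm]

lemma norm_phi_sq (m : ℕ → M) {k : ℕ} (a : Fin k → A) :
    ‖∑ i : Fin k, m i <• a i‖ ^ 2 = ‖∑ i, star (a i) * gfun m k a i‖ := by
  rw [rcs_norm_sq_eq, phi_inner_phi]
  rfl

lemma norm_gv_sq (m : ℕ → M) {k : ℕ} (a : Fin k → A) :
    oldPiCStarNorm k (gfun m k a) ^ 2
      = ‖⟪∑ i : Fin k, m i <• a i, ∑ i : Fin k, m i <• (gfun m k a i)⟫_A‖ := by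
  rw [oldPi_sq]
  congr 1
  exact gram_inner_gram m a

lemma gv_le (m : ℕ → M) {k : ℕ} {C : ℝ} (hC : 0 ≤ C)
    (hφ : ∀ a : Fin k → A, ‖∑ i, m i <• a i‖ ≤ C * oldPiCStarNorm k a)
    (a : Fin k → A) :
    oldPiCStarNorm k (gfun m k a) ≤ C ^ 2 * oldPiCStarNorm k a := by
  set N := oldPiCStarNorm k (gfun m k a) with hN
  rcases eq_or_lt_of_le (oldPi_nonneg k (gfun m k a)) with h0 | h0
  · rw [hN, ← h0]; have := oldPi_nonneg k a; positivity
  · have h1 : N ^ 2 ≤ (C * oldPiCStarNorm k a) * (C * N) := by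
      rw [hN, norm_gv_sq]
      calc ‖⟪∑ i : Fin k, m i <• a i, ∑ i : Fin k, m i <• (gfun m k a i)⟫_A‖
          ≤ ‖∑ i : Fin k, m i <• a i‖ * ‖∑ i : Fin k, m i <• (gfun m k a i)‖ :=
            rcs_norm_inner_le _ _
        _ ≤ (C * oldPiCStarNorm k a) * (C * N) := by
            exact mul_le_mul (hφ a) (hφ (gfun m k a)) (norm_nonneg _)
              (mul_nonneg hC (oldPi_nonneg _ _))
    have := le_of_mul_le_mul_right (by nlinarith : N * N ≤ (C ^ 2 * oldPiCStarNorm k a) * N) h0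
    exact this

lemma key_iff (m : ℕ → M) (k : ℕ) {C : ℝ} (hC : 0 ≤ C) :
    (∀ a : Fin k → A, ‖∑ i, m i <• a i‖ ≤ C * oldPiCStarNorm k a) ↔
      matCStarNorm k (Matrix.of fun i j : Fin k => ⟪m (i : ℕ), m (j : ℕ)⟫_A) ≤ C ^ 2 := by
  have hgfun : ∀ v : Fin k → A,
      (fun i => ∑ j, (Matrix.of fun i j : Fin k => ⟪m (i : ℕ), m (j : ℕ)⟫_A) i j
        * v j) = gfun m k v := fun v => rfl
  have hSne : {r : ℝ | ∃ v : Fin k → A, oldPiCStarNorm k v ≤ 1 ∧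
      r = oldPiCStarNorm k (fun i => ∑ j,
        (Matrix.of fun i j : Fin k => ⟪m (i : ℕ), m (j : ℕ)⟫_A) i j * v j)}.Nonempty := by
    refine ⟨oldPiCStarNorm k (gfun m k 0), 0, by simp [oldPiCStarNorm], ?_⟩
    rw [hgfun]
  have hSbdd : BddAbove {r : ℝ | ∃ v : Fin k → A, oldPiCStarNorm k v ≤ 1 ∧
      r = oldPiCStarNorm k (fun i => ∑ j,
        (Matrix.of fun i j : Fin k => ⟪m (i : ℕ), m (j : ℕ)⟫_A) i j * v j)} := by
    refine ⟨∑ i : Fin k, ∑ j : Fin k, ‖⟪m (i : ℕ), m (j : ℕ)⟫_A‖, ?_⟩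
    rintro r ⟨v, hv, rfl⟩
    rw [hgfun]
    calc oldPiCStarNorm k (gfun m k v)
        ≤ ∑ i : Fin k, ‖gfun m k v i‖ := oldPi_le_sum _
      _ ≤ ∑ i : Fin k, ∑ j : Fin k, ‖⟪m (i : ℕ), m (j : ℕ)⟫_A‖ := by
          refine Finset.sum_le_sum fun i _ => ?_
          refine (norm_sum_le _ _).trans (Finset.sum_le_sum fun j _ => ?_)
          calc ‖⟪m (i : ℕ), m (j : ℕ)⟫_A * v j‖
              ≤ ‖⟪m (i : ℕ), m (j : ℕ)⟫_A‖ * ‖v j‖ := norm_mul_le _ _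
            _ ≤ ‖⟪m (i : ℕ), m (j : ℕ)⟫_A‖ * 1 := by
                refine mul_le_mul_of_nonneg_left ?_ (norm_nonneg _)
                exact (norm_apply_le_oldPi v j).trans hv
            _ = _ := mul_one _
  constructor
  · intro hφ
    refine csSup_le hSne ?_
    rintro r ⟨v, hv, rfl⟩
    rw [hgfun]
    calc oldPiCStarNorm k (gfun m k v)
        ≤ C ^ 2 * oldPiCStarNorm k v := gv_le m hC hφ _
      _ ≤ C ^ 2 * 1 := by nlinarith [oldPi_nonneg k v]
      _ = C ^ 2 := mul_one _
  · intro hsup a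
    have hg : oldPiCStarNorm k (gfun m k a) ≤ C ^ 2 * oldPiCStarNorm k a := by
      rcases eq_or_ne a 0 with rfl | ha
      · have : gfun m k (0 : Fin k → A) = 0 := by ext i; simp [gfun]
        simp [this, oldPiCStarNorm]
      · have ht : (0:ℝ) < oldPiCStarNorm k a := oldPi_pos a ha
        set t : ℝ := oldPiCStarNorm k a with hts
        set v : Fin k → A := ((t⁻¹ : ℝ) : ℂ) • a with hvdef
        have hv1 : oldPiCStarNorm k v ≤ 1 := by
          rw [hvdef, oldPi_smul, abs_of_pos (inv_pos.mpr ht), ← hts, inv_mul_cancel₀ ht.ne']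
        have hmem : oldPiCStarNorm k (gfun m k v) ∈
            {r : ℝ | ∃ v : Fin k → A, oldPiCStarNorm k v ≤ 1 ∧
              r = oldPiCStarNorm k (fun i => ∑ j,
                (Matrix.of fun i j : Fin k => ⟪m (i : ℕ), m (j : ℕ)⟫_A) i j * v j)} :=
          ⟨v, hv1, by rw [hgfun]⟩
        have hle : oldPiCStarNorm k (gfun m k v) ≤ C ^ 2 :=
          (le_csSup hSbdd hmem).trans hsup
        have hnorm : oldPiCStarNorm k (gfun m k v) = t⁻¹ * oldPiCStarNorm k (gfun m k a) := by
          rw [hvdef, gfun_smul, oldPi_smul, abs_of_pos (inv_pos.mpr ht)]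
        rw [hnorm] at hle
        calc oldPiCStarNorm k (gfun m k a)
            = t * (t⁻¹ * oldPiCStarNorm k (gfun m k a)) := by
              field_simp
          _ ≤ t * C ^ 2 := by
              exact mul_le_mul_of_nonneg_left hle ht.le
          _ = C ^ 2 * t := mul_comm _ _
    -- now conclude
    have hsq : ‖∑ i : Fin k, m i <• a i‖ ^ 2 ≤ (C * oldPiCStarNorm k a) ^ 2 := by
      rw [norm_phi_sq]
      calc ‖∑ i, star (a i) * gfun m k a i‖
          ≤ oldPiCStarNorm k a * oldPiCStarNorm k (gfun m k a) :=
            oldPi_inner_le _ _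
        _ ≤ oldPiCStarNorm k a * (C ^ 2 * oldPiCStarNorm k a) :=
            mul_le_mul_of_nonneg_left hg (oldPi_nonneg _ _)
        _ = (C * oldPiCStarNorm k a) ^ 2 := by ring
    exact (abs_le_of_sq_le_sq' hsq (mul_nonneg hC (oldPi_nonneg _ _))).2

end Key

end AuxStmt14

/-- Given a sequence `(m₁, m₂, …)` in a Hilbert C*-module `M`, the map
`φ : ℓ²(A) → M, φ((a₁, a₂, …)) = Σₙ aₙ mₙ` defines a bounded `A`-module map (equivalently,
the densely defined map is bounded on all finitely supported tuples) if and only if the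
matrix `(⟨mᵢ, mⱼ⟩)` is bounded, i.e. `supₙ ‖(⟨mᵢ, mⱼ⟩)_{i,j=1}^n‖ < ∞`; moreover
`‖φ‖² = supₙ ‖(⟨mᵢ, mⱼ⟩)_{i,j=1}^n‖`. -/
theorem stmt_14
    {M : Type*} [NormedAddCommGroup M] [NormedSpace ℂ M] [SMul Aᵐᵒᵖ M] [RightCStarModule A M]
    [CompleteSpace M]
    (m : ℕ → M) :
    ((∃ C : ℝ, 0 ≤ C ∧ ∀ (k : ℕ) (a : Fin k → A),
        ‖∑ i, m i <• a i‖ ≤ C * oldPiCStarNorm k a) ↔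
      BddAbove {r : ℝ | ∃ k : ℕ,
        r = matCStarNorm k (Matrix.of fun i j : Fin k => ⟪m (i : ℕ), m (j : ℕ)⟫_A)}) ∧
    (∀ C : ℝ, 0 ≤ C →
      ((∀ (k : ℕ) (a : Fin k → A),
          ‖∑ i, m i <• a i‖ ≤ C * oldPiCStarNorm k a) ↔
        (∀ r ∈ {r : ℝ | ∃ k : ℕ,
            r = matCStarNorm k (Matrix.of fun i j : Fin k => ⟪m (i : ℕ), m (j : ℕ)⟫_A)},
          r ≤ C ^ 2))) := by
  constructor
  · constructor
    · rintro ⟨C, hC, hb⟩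
      refine ⟨C ^ 2, ?_⟩
      rintro r ⟨k, rfl⟩
      exact (key_iff m k hC).mp (hb k)
    · rintro ⟨B, hB⟩
      refine ⟨Real.sqrt (max B 0), Real.sqrt_nonneg _, fun k => ?_⟩
      refine (key_iff m k (Real.sqrt_nonneg _)).mpr ?_
      rw [Real.sq_sqrt (le_max_right B 0)]
      exact le_trans (hB ⟨k, rfl⟩) (le_max_left _ _)
  · intro C hC
    constructor
    · rintro hb r ⟨k, rfl⟩
      exact (key_iff m k hC).mp (hb k)
    · intro h k
      exact (key_iff m k hC).mpr (h _ ⟨k, rfl⟩)
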